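/- Let ε₀, μ₀, τ₀, σ₀ > 0 and let (E, H, J, K) solve the abstract weak graphene system on [0, T_fin], with K twice continuously differentiable. Then for every t ∈ [0, T_fin] the time-differentiated energy identity (1/2)·d/dt[ ε₀‖E'(t)‖²_X + μ₀‖H'(t)‖²_Y + (τ₀/σ₀)‖J'(t)‖²_Z ] + (1/σ₀)‖J'(t)‖²_Z = −⟨K'(t), H'(t)⟩_Y holds. -/

import Mathlib

open scoped RealInnerProductSpace

private lemma deriv_eqOn_Icc {V : Type*} [NormedAddCommGroup V] [NormedSpace ℝ V]
    {f g : ℝ → V} {a b t : ℝ} (hab : a < b) (ht : t ∈ Set.Icc a b)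
    (hf : DifferentiableAt ℝ f t) (hg : DifferentiableAt ℝ g t)
    (h : Set.EqOn f g (Set.Icc a b)) : deriv f t = deriv g t := by
  have hu : UniqueDiffWithinAt ℝ (Set.Icc a b) t := (uniqueDiffOn_Icc hab) t ht
  rw [← hf.derivWithin hu, ← hg.derivWithin hu, derivWithin_congr h (h ht)]

/-- Time-differentiated energy identity for the abstract weak
graphene system (with `K` twice continuously differentiable). -/
theorem graphene_differentiated_energy_identity
    {X Y Z : Type*}
    [NormedAddCommGroup X] [InnerProductSpace ℝ X]
    [NormedAddCommGroup Y] [InnerProductSpace ℝ Y]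
    [NormedAddCommGroup Z] [InnerProductSpace ℝ Z]
    (B : X →L[ℝ] Y) (T : X →L[ℝ] Z)
    (ε₀ μ₀ τ₀ σ₀ Tfin : ℝ)
    (hε₀ : 0 < ε₀) (hμ₀ : 0 < μ₀) (hτ₀ : 0 < τ₀) (hσ₀ : 0 < σ₀) (hTfin : 0 < Tfin)
    (E : ℝ → X) (H : ℝ → Y) (J : ℝ → Z) (K : ℝ → Y)
    (hE : ContDiff ℝ 2 E) (hH : ContDiff ℝ 2 H) (hJ : ContDiff ℝ 2 J)
    (hK : ContDiff ℝ 2 K)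
    (heq1 : ∀ t ∈ Set.Icc (0:ℝ) Tfin, ∀ φ : X,
      ε₀ * ⟪deriv E t, φ⟫ = ⟪H t, B φ⟫ - ⟪J t, T φ⟫)
    (heq2 : ∀ t ∈ Set.Icc (0:ℝ) Tfin, μ₀ • deriv H t = -(B (E t)) - K t)
    (heq3 : ∀ t ∈ Set.Icc (0:ℝ) Tfin, τ₀ • deriv J t + J t = σ₀ • T (E t)) :
    ∀ t ∈ Set.Icc (0:ℝ) Tfin,
      (1/2) * deriv (fun s => ε₀ * ‖deriv E s‖^2 + μ₀ * ‖deriv H s‖^2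
          + (τ₀/σ₀) * ‖deriv J s‖^2) t
        + (1/σ₀) * ‖deriv J t‖^2 = -⟪deriv K t, deriv H t⟫ := by
  intro t ht
  -- C¹ smoothness of the derivatives
  have h2 : (2 : WithTop ℕ∞) = 1 + 1 := by norm_num
  have hE1 : ContDiff ℝ 1 (deriv E) := (contDiff_succ_iff_deriv.mp (h2 ▸ hE)).2.2
  have hH1 : ContDiff ℝ 1 (deriv H) := (contDiff_succ_iff_deriv.mp (h2 ▸ hH)).2.2
  have hJ1 : ContDiff ℝ 1 (deriv J) := (contDiff_succ_iff_deriv.mp (h2 ▸ hJ)).2.2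
  have hK1 : ContDiff ℝ 1 (deriv K) := (contDiff_succ_iff_deriv.mp (h2 ▸ hK)).2.2
  -- HasDerivAt for first derivatives
  have hEd : HasDerivAt E (deriv E t) t :=
    ((hE.differentiable (by norm_num)) t).hasDerivAt
  have hHd : HasDerivAt H (deriv H t) t :=
    ((hH.differentiable (by norm_num)) t).hasDerivAt
  have hJd : HasDerivAt J (deriv J t) t :=
    ((hJ.differentiable (by norm_num)) t).hasDerivAt
  have hKd : HasDerivAt K (deriv K t) t :=
    ((hK.differentiable (by norm_num)) t).hasDerivAt
  -- HasDerivAt for second derivatives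
  have hEd2 : HasDerivAt (deriv E) (deriv (deriv E) t) t :=
    ((hE1.differentiable (by norm_num)) t).hasDerivAt
  have hHd2 : HasDerivAt (deriv H) (deriv (deriv H) t) t :=
    ((hH1.differentiable (by norm_num)) t).hasDerivAt
  have hJd2 : HasDerivAt (deriv J) (deriv (deriv J) t) t :=
    ((hJ1.differentiable (by norm_num)) t).hasDerivAt
  set E' := deriv E t
  set H' := deriv H t
  set J' := deriv J t
  set K' := deriv K t
  set E'' := deriv (deriv E) t
  set H'' := deriv (deriv H) t
  set J'' := deriv (deriv J) t
  -- Differentiated equation (i) tested at φ = E' :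
  have eq1' : ε₀ * ⟪E'', E'⟫ = ⟪H', B E'⟫ - ⟪J', T E'⟫ := by
    have hfd : HasDerivAt (fun s => ε₀ * ⟪deriv E s, E'⟫) (ε₀ * ⟪E'', E'⟫) t := by
      have := (hEd2.inner ℝ (hasDerivAt_const t E')).const_mul ε₀
      simpa using this
    have hgd : HasDerivAt (fun s => ⟪H s, B E'⟫ - ⟪J s, T E'⟫)
        (⟪H', B E'⟫ - ⟪J', T E'⟫) t := by
      have h1 := hHd.inner ℝ (hasDerivAt_const t (B E'))
      have h2 := hJd.inner ℝ (hasDerivAt_const t (T E'))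
      have h1' : HasDerivAt (fun s => ⟪H s, B E'⟫) ⟪H', B E'⟫ t := by simpa using h1
      have h2' : HasDerivAt (fun s => ⟪J s, T E'⟫) ⟪J', T E'⟫ t := by simpa using h2
      exact h1'.sub h2'
    have := deriv_eqOn_Icc hTfin ht hfd.differentiableAt hgd.differentiableAt
      (fun s hs => heq1 s hs E')
    rwa [hfd.deriv, hgd.deriv] at this
  -- Differentiated equation (ii):
  have eq2' : μ₀ • H'' = -(B E') - K' := by
    have hfd : HasDerivAt (fun s => μ₀ • deriv H s) (μ₀ • H'') t := hHd2.const_smul μ₀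
    have hBEd : HasDerivAt (fun s => B (E s)) (B E') t :=
      B.hasFDerivAt.comp_hasDerivAt t hEd
    have hgd : HasDerivAt (fun s => -(B (E s)) - K s) (-(B E') - K') t := hBEd.neg.sub hKd
    have := deriv_eqOn_Icc hTfin ht hfd.differentiableAt hgd.differentiableAt
      (fun s hs => heq2 s hs)
    rwa [hfd.deriv, hgd.deriv] at this
  -- Differentiated equation (iii):
  have eq3' : τ₀ • J'' + J' = σ₀ • T E' := by
    have hfd : HasDerivAt (fun s => τ₀ • deriv J s + J s) (τ₀ • J'' + J') t :=
      (hJd2.const_smul τ₀).add hJd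
    have hTEd : HasDerivAt (fun s => T (E s)) (T E') t :=
      T.hasFDerivAt.comp_hasDerivAt t hEd
    have hgd : HasDerivAt (fun s => σ₀ • T (E s)) (σ₀ • T E') t := hTEd.const_smul σ₀
    have := deriv_eqOn_Icc hTfin ht hfd.differentiableAt hgd.differentiableAt
      (fun s hs => heq3 s hs)
    rwa [hfd.deriv, hgd.deriv] at this
  -- Scalar versions of (ii) and (iii)
  have eq2s : μ₀ * ⟪H'', H'⟫ = -⟪B E', H'⟫ - ⟪K', H'⟫ := by
    have := congrArg (fun v => ⟪v, H'⟫) eq2'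
    simpa [real_inner_smul_left, inner_sub_left, inner_neg_left] using this
  have eq3s : τ₀ * ⟪J'', J'⟫ + ⟪J', J'⟫ = σ₀ * ⟪T E', J'⟫ := by
    have := congrArg (fun v => ⟪v, J'⟫) eq3'
    simpa [real_inner_smul_left, inner_add_left] using this
  -- Derivative of the energy
  have hed : HasDerivAt (fun s => ε₀ * ‖deriv E s‖^2 + μ₀ * ‖deriv H s‖^2
      + (τ₀/σ₀) * ‖deriv J s‖^2)
      (ε₀ * (⟪E', E''⟫ + ⟪E'', E'⟫) + μ₀ * (⟪H', H''⟫ + ⟪H'', H'⟫)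
        + (τ₀/σ₀) * (⟪J', J''⟫ + ⟪J'', J'⟫)) t := by
    have hE2 : HasDerivAt (fun s => ‖deriv E s‖^2) (⟪E', E''⟫ + ⟪E'', E'⟫) t := by
      have := hEd2.inner ℝ hEd2
      simpa [real_inner_self_eq_norm_sq] using this
    have hH2 : HasDerivAt (fun s => ‖deriv H s‖^2) (⟪H', H''⟫ + ⟪H'', H'⟫) t := by
      have := hHd2.inner ℝ hHd2
      simpa [real_inner_self_eq_norm_sq] using this
    have hJ2 : HasDerivAt (fun s => ‖deriv J s‖^2) (⟪J', J''⟫ + ⟪J'', J'⟫) t := by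
      have := hJd2.inner ℝ hJd2
      simpa [real_inner_self_eq_norm_sq] using this
    exact ((hE2.const_mul ε₀).add (hH2.const_mul μ₀)).add (hJ2.const_mul (τ₀/σ₀))
  rw [hed.deriv]
  -- Conclude by algebra
  have hsym1 : ⟪E', E''⟫ = ⟪E'', E'⟫ := real_inner_comm _ _
  have hsym2 : ⟪H', H''⟫ = ⟪H'', H'⟫ := real_inner_comm _ _
  have hsym3 : ⟪J', J''⟫ = ⟪J'', J'⟫ := real_inner_comm _ _
  have hsym4 : ⟪H', B E'⟫ = ⟪B E', H'⟫ := real_inner_comm _ _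
  have hsym5 : ⟪J', T E'⟫ = ⟪T E', J'⟫ := real_inner_comm _ _
  have hnJ : ‖J'‖^2 = ⟪J', J'⟫ := (real_inner_self_eq_norm_sq _).symm
  rw [hnJ, hsym1, hsym2, hsym3]
  have hσ : σ₀ ≠ 0 := ne_of_gt hσ₀
  have eq3d : τ₀/σ₀ * ⟪J'', J'⟫ + 1/σ₀ * ⟪J', J'⟫ = ⟪T E', J'⟫ := by
    field_simp
    linear_combination eq3s
  linear_combination eq1' + eq2s + eq3d + hsym4 - hsym5
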